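/- For a strictly convex quadratic E(x) = (1/2)xᵀAx - bᵀx minimized by successive exact line searches along pairwise A-conjugate nonzero directions d₁, …, dₙ starting from any x₀, the iterate xₙ is the exact global minimizer x* = A⁻¹b. -/

import Mathlib

open Matrix

lemma aux_sum_dotProduct {n m : ℕ} (s : Finset (Fin m)) (f : Fin m → Fin n → ℝ)
    (v : Fin n → ℝ) : (∑ i ∈ s, f i) ⬝ᵥ v = ∑ i ∈ s, f i ⬝ᵥ v := by
  simp only [dotProduct, Finset.sum_apply, Finset.sum_mul]
  exact Finset.sum_comm

/-- Finite termination of the conjugate-gradient method: successive exact line searches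
along `n` pairwise `A`-conjugate nonzero directions, starting from any `x₀`, reach the
exact global minimizer `x* = A⁻¹ b` of `E x = (1/2) xᵀAx - bᵀx` after `n` steps. -/
theorem cg_finite_termination (n : ℕ) (A : Matrix (Fin n) (Fin n) ℝ) (hA : A.PosDef)
    (b : Fin n → ℝ) (d : Fin n → Fin n → ℝ) (hd0 : ∀ i, d i ≠ 0)
    (hconj : ∀ i j, i ≠ j → d i ⬝ᵥ A.mulVec (d j) = 0)
    (x₀ : Fin n → ℝ) (x : ℕ → Fin n → ℝ) (hx0 : x 0 = x₀)
    (t : Fin n → ℝ)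
    (ht : ∀ k : Fin n, t k = -((A.mulVec (x k) - b) ⬝ᵥ d k) / (d k ⬝ᵥ A.mulVec (d k)))
    (hstep : ∀ k : Fin n, x (k + 1) = x k + t k • d k) :
    x n = A⁻¹.mulVec b := by
  have hApos : ∀ i : Fin n, 0 < d i ⬝ᵥ A.mulVec (d i) := by
    intro i
    have := hA.dotProduct_mulVec_pos (hd0 i)
    simpa using this
  set g : ℕ → Fin n → ℝ := fun m => A.mulVec (x m) - b with hg
  -- gradient recursion
  have hgrec : ∀ k : Fin n, g ((k : ℕ) + 1) = g k + t k • A.mulVec (d k) := by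
    intro k
    simp only [hg]
    rw [hstep k, mulVec_add, mulVec_smul]
    abel
  -- g n is orthogonal to every direction
  have key : ∀ k : Fin n, ∀ m : ℕ, (k : ℕ) + 1 ≤ m → m ≤ n → g m ⬝ᵥ d k = 0 := by
    intro k m hm
    induction m, hm using Nat.le_induction with
    | base =>
      intro _
      rw [hgrec k, add_dotProduct, smul_dotProduct, smul_eq_mul, ht k]
      have hcomm : A.mulVec (d k) ⬝ᵥ d k = d k ⬝ᵥ A.mulVec (d k) := dotProduct_comm _ _
      rw [hcomm]
      have hQ : d k ⬝ᵥ A.mulVec (d k) ≠ 0 := (hApos k).ne'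
      simp only [hg, sub_dotProduct]
      field_simp
      ring
    | succ m hm ih =>
      intro hmn
      have hmlt : m < n := lt_of_lt_of_le (Nat.lt_succ_self m) hmn
      set j : Fin n := ⟨m, hmlt⟩ with hj
      have hjm : (j : ℕ) = m := rfl
      have hstepj := hgrec j
      rw [hjm] at hstepj
      rw [hstepj, add_dotProduct, smul_dotProduct, smul_eq_mul]
      have hkj : k ≠ j := by
        intro h
        have : (k : ℕ) = m := by rw [h]
        omega
      have hc : A.mulVec (d j) ⬝ᵥ d k = 0 := by
        rw [dotProduct_comm]; exact hconj k j hkj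
      rw [hc, ih (le_of_lt hmlt)]
      ring
  have horth : ∀ k : Fin n, g n ⬝ᵥ d k = 0 := fun k =>
    key k n (Nat.succ_le_of_lt k.isLt) le_rfl
  -- directions are linearly independent
  have hli : LinearIndependent ℝ d := by
    rw [Fintype.linearIndependent_iff]
    intro c hc j
    have h1 : (∑ i, c i • d i) ⬝ᵥ A.mulVec (d j) = 0 := by rw [hc]; simp
    rw [aux_sum_dotProduct] at h1
    simp only [smul_dotProduct, smul_eq_mul] at h1
    rw [Finset.sum_eq_single j] at h1
    · rcases mul_eq_zero.mp h1 with h | h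
      · exact h
      · exact absurd h (hApos j).ne'
    · intro i _ hij
      rw [hconj i j hij, mul_zero]
    · intro h; exact absurd (Finset.mem_univ j) h
  rcases Nat.eq_zero_or_pos n with hn | hn
  · subst hn
    funext i
    exact i.elim0
  haveI : Nonempty (Fin n) := ⟨⟨0, hn⟩⟩
  have hcard : Fintype.card (Fin n) = Module.finrank ℝ (Fin n → ℝ) := by simp
  let B := basisOfLinearIndependentOfCardEqFinrank hli hcard
  have hB : ∀ i, B i = d i := fun i => by
    simp [B, coe_basisOfLinearIndependentOfCardEqFinrank]
  -- g n = 0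
  have hgn : g n = 0 := by
    rw [← dotProduct_self_eq_zero (v := g n)]
    conv_lhs => rw [← B.sum_repr (g n)]
    rw [dotProduct_comm, aux_sum_dotProduct]
    apply Finset.sum_eq_zero
    intro i _
    rw [hB, smul_dotProduct, smul_eq_mul, dotProduct_comm]
    rw [show (∑ i : Fin n, (B.repr (g ↑n)) i • B i) = g ↑n from B.sum_repr (g ↑n)]
    rw [horth i, mul_zero]
  have hAx : A.mulVec (x n) = b := by
    have := hgn
    simp only [hg, sub_eq_zero] at this
    exact this
  have hdet : IsUnit A.det := isUnit_iff_ne_zero.mpr hA.det_pos.ne'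
  rw [← hAx, mulVec_mulVec, Matrix.nonsing_inv_mul A hdet, one_mulVec]
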